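/- Let R₁, …, Rₙ be nonempty subsets of ℝ². There exists a nonempty compact convex set K ⊆ ℝ² whose topological frontier intersects every Rᵢ if and only if there exist points q₁, …, qₙ with qᵢ ∈ Rᵢ for every i such that the set {q₁, …, qₙ} is in weakly convex position, i.e., for every i there is a closed halfplane containing all of q₁, …, qₙ whose boundary line passes through qᵢ. -/

import Mathlib

open Set

private lemma fval (f : (ℝ × ℝ) →ₗ[ℝ] ℝ) (p : ℝ × ℝ) :
    f p = f (1,0) * p.1 + f (0,1) * p.2 := by
  have hp : p = p.1 • ((1:ℝ),(0:ℝ)) + p.2 • ((0:ℝ),(1:ℝ)) := by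
    apply Prod.ext <;> simp
  calc f p = f (p.1 • ((1:ℝ),(0:ℝ)) + p.2 • ((0:ℝ),(1:ℝ))) := by rw [← hp]
  _ = p.1 * f (1,0) + p.2 * f (0,1) := by
      rw [map_add, map_smul, map_smul]; simp [smul_eq_mul]
  _ = _ := by ring

private lemma a_ne_zero (f : (ℝ × ℝ) →ₗ[ℝ] ℝ) (hf : f ≠ 0) :
    ((f (1,0), f (0,1)) : ℝ × ℝ) ≠ 0 := by
  intro h
  apply hf
  apply LinearMap.ext
  intro p
  rw [fval f p]
  have h1 : f (1,0) = 0 := congrArg Prod.fst h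
  have h2 : f (0,1) = 0 := congrArg Prod.snd h
  simp [h1, h2]

/-- Supporting halfplane at a frontier point of a closed convex set. -/
private lemma support_at_frontier (K : Set (ℝ × ℝ)) (hK : Convex ℝ K) (hcl : IsClosed K)
    (x : ℝ × ℝ) (hx : x ∈ frontier K) :
    ∃ a : ℝ × ℝ, a ≠ 0 ∧ ∀ y ∈ K, a.1 * y.1 + a.2 * y.2 ≤ a.1 * x.1 + a.2 * x.2 := by
  have hxK : x ∈ K := hcl.frontier_subset hx
  rcases eq_empty_or_nonempty (interior K) with hint | hint
  · -- empty interior: K lies in a proper affine subspace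
    have hspan : affineSpan ℝ K ≠ ⊤ := by
      intro h
      rw [← hK.interior_nonempty_iff_affineSpan_eq_top] at h
      exact h.ne_empty hint
    have hdir : (affineSpan ℝ K).direction < ⊤ := by
      rw [lt_top_iff_ne_top]
      intro h
      exact hspan ((AffineSubspace.direction_eq_top_iff_of_nonempty
        ⟨x, subset_affineSpan ℝ K hxK⟩).mp h)
    obtain ⟨f, hf0, hfmap⟩ := Submodule.exists_dual_map_eq_bot_of_lt_top hdir inferInstance
    refine ⟨(f (1,0), f (0,1)), a_ne_zero f hf0, fun y hy => ?_⟩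
    have hmem : y - x ∈ (affineSpan ℝ K).direction := by
      simpa using AffineSubspace.vsub_mem_direction
        (subset_affineSpan ℝ K hy) (subset_affineSpan ℝ K hxK)
    have hsub : f (y - x) = 0 := by
      have hm : f (y - x) ∈ Submodule.map f (affineSpan ℝ K).direction :=
        Submodule.mem_map_of_mem hmem
      rw [hfmap] at hm
      simpa using hm
    have heq : f y = f x := by
      have h := map_sub f y x
      rw [hsub] at h
      linarith
    rw [show ((f (1,0), f (0,1)) : ℝ × ℝ).1 = f (1,0) from rfl]
    rw [show ((f (1,0), f (0,1)) : ℝ × ℝ).2 = f (0,1) from rfl]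
    rw [← fval f y, ← fval f x, heq]
  · -- nonempty interior: Hahn-Banach separation
    obtain ⟨f, hf⟩ := geometric_hahn_banach_open_point (hK.interior) isOpen_interior
      (hx.2 : x ∉ interior K)
    obtain ⟨w, hw⟩ := hint
    have hfw : f w < f x := hf w hw
    have hfne : (f : (ℝ × ℝ) →ₗ[ℝ] ℝ) ≠ 0 := by
      intro h
      have : f w = 0 := congrFun (congrArg DFunLike.coe h) w
      have : f x = 0 := congrFun (congrArg DFunLike.coe h) x
      have hw0 : (f : (ℝ × ℝ) →ₗ[ℝ] ℝ) w = f w := rfl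
      simp_all
    refine ⟨(f (1,0), f (0,1)), a_ne_zero f hfne, fun y hy => ?_⟩
    have key : f y ≤ f x := by
      by_contra h
      push_neg at h
      set t : ℝ := (f x - f w) / (f y - f w) with ht
      have hyw : (0:ℝ) < f y - f w := by linarith
      have ht0 : 0 < t := div_pos (by linarith) hyw
      have ht1 : t < 1 := (div_lt_one hyw).mpr (by linarith)
      have hz : t • y + (1 - t) • w ∈ interior K := by
        apply hK.combo_self_interior_subset_interior ht0.le (by linarith : (0:ℝ) < 1 - t)
          (by ring)
        exact Set.add_mem_add (smul_mem_smul_set hy) (smul_mem_smul_set hw)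
      have hlt := hf _ hz
      rw [map_add, map_smul, map_smul] at hlt
      have hft : t * f y + (1 - t) * f w < f x := by simpa [smul_eq_mul] using hlt
      have hts : t * (f y - f w) = f x - f w := by
        rw [ht]; field_simp
      nlinarith
    have e1 : ∀ p : ℝ × ℝ, f p = f (1,0) * p.1 + f (0,1) * p.2 := fun p =>
      fval (f : (ℝ × ℝ) →ₗ[ℝ] ℝ) p
    rw [show ((f (1,0), f (0,1)) : ℝ × ℝ).1 = f (1,0) from rfl]
    rw [show ((f (1,0), f (0,1)) : ℝ × ℝ).2 = f (0,1) from rfl]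
    rw [← e1 y, ← e1 x]
    exact key

theorem convex_body_frontier_transversal_iff_weakly_convex_selection
    (n : ℕ) (R : Fin n → Set (ℝ × ℝ)) (hne : ∀ i, (R i).Nonempty) :
    (∃ K : Set (ℝ × ℝ), K.Nonempty ∧ IsCompact K ∧ Convex ℝ K ∧
      ∀ i, (frontier K ∩ R i).Nonempty) ↔
    (∃ q : Fin n → ℝ × ℝ, (∀ i, q i ∈ R i) ∧
      ∀ i, ∃ a : ℝ × ℝ, ∃ c : ℝ, a ≠ 0 ∧
        (∀ j, a.1 * (q j).1 + a.2 * (q j).2 ≤ c) ∧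
        a.1 * (q i).1 + a.2 * (q i).2 = c) := by
  constructor
  · rintro ⟨K, hKne, hKc, hKconv, hKf⟩
    choose q hq1 hq2 using hKf
    refine ⟨q, hq2, fun i => ?_⟩
    obtain ⟨a, ha, hle⟩ := support_at_frontier K hKconv hKc.isClosed (q i) (hq1 i)
    exact ⟨a, a.1 * (q i).1 + a.2 * (q i).2, ha,
      fun j => hle (q j) (hKc.isClosed.frontier_subset (hq1 j)), rfl⟩
  · rintro ⟨q, hqR, hsupp⟩
    rcases Nat.eq_zero_or_pos n with hn | hn
    · subst hn
      exact ⟨{0}, ⟨0, rfl⟩, isCompact_singleton, convex_singleton 0, fun i => i.elim0⟩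
    · set K : Set (ℝ × ℝ) := convexHull ℝ (Set.range q) with hKdef
      have hKcomp : IsCompact K := (Set.finite_range q).isCompact_convexHull ℝ
      have hKconv : Convex ℝ K := convex_convexHull ℝ _
      have hKne : K.Nonempty := ⟨q ⟨0, hn⟩, subset_convexHull ℝ _ (mem_range_self _)⟩
      refine ⟨K, hKne, hKcomp, hKconv, fun i => ?_⟩
      obtain ⟨a, c, ha, hle, heq⟩ := hsupp i
      have hKle : ∀ y ∈ K, a.1 * y.1 + a.2 * y.2 ≤ c := by
        intro y hy
        have hconv : Convex ℝ {w : ℝ × ℝ | a.1 * w.1 + a.2 * w.2 ≤ c} := by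
          refine convex_halfSpace_le ⟨fun u v => by simp; ring, fun r u => by simp; ring⟩ c
        have : K ⊆ {w : ℝ × ℝ | a.1 * w.1 + a.2 * w.2 ≤ c} := by
          apply convexHull_min _ hconv
          rintro _ ⟨j, rfl⟩
          exact hle j
        exact this hy
      have hqiK : q i ∈ K := subset_convexHull ℝ _ (mem_range_self i)
      have hnotint : q i ∉ interior K := by
        intro hint
        rw [mem_interior_iff_mem_nhds, Metric.mem_nhds_iff] at hint
        obtain ⟨ε, hε, hball⟩ := hint
        have hna : 0 < ‖a‖ := norm_pos_iff.mpr ha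
        set t : ℝ := ε / (2 * ‖a‖) with htdef
        have ht : 0 < t := div_pos hε (by positivity)
        have hz : q i + t • a ∈ K := by
          apply hball
          rw [Metric.mem_ball, dist_eq_norm]
          have : q i + t • a - q i = t • a := by abel
          have hval : t * ‖a‖ = ε / 2 := by
            rw [htdef]; field_simp [ne_of_gt hna]
          rw [this, norm_smul, Real.norm_eq_abs, abs_of_pos ht, hval]
          linarith
        have := hKle _ hz
        have haa : 0 < a.1 * a.1 + a.2 * a.2 := by
          by_contra hcon
          push_neg at hcon
          have h1 : a.1 = 0 := by nlinarith [sq_nonneg a.1, sq_nonneg a.2]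
          have h2 : a.2 = 0 := by nlinarith [sq_nonneg a.1, sq_nonneg a.2]
          exact ha (Prod.ext h1 h2)
        have hz1 : (q i + t • a).1 = (q i).1 + t * a.1 := rfl
        have hz2 : (q i + t • a).2 = (q i).2 + t * a.2 := rfl
        rw [hz1, hz2] at this
        nlinarith
      refine ⟨q i, ?_, hqR i⟩
      rw [hKcomp.isClosed.frontier_eq]
      exact ⟨hqiK, hnotint⟩
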